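/- Let G be a connected bipartite graph with color classes E and V. Then the root polytope Q_G has dimension |E| + |V| - 2. -/
import Mathlib


open scoped Classical Pointwise

/-- The root polytope of a bipartite graph with color classes `E` and `V` and edge set `A`:
the convex hull of the points `𝐞 + 𝐯` in `ℝ^E ⊕ ℝ^V` over the edges `ev ∈ A`. -/
noncomputable def rootPolytope {E V : Type*} (A : Finset (E × V)) : Set ((E ⊕ V) → ℝ) :=
  convexHull ℝ
    ((fun p : E × V => Pi.single (Sum.inl p.1) (1 : ℝ) + Pi.single (Sum.inr p.2) (1 : ℝ)) ''
      (A : Set (E × V)))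

/-- The number of lattice points in a subset of `ℝ^ι`. -/
noncomputable def latticeCount {ι : Type*} (A : Set (ι → ℝ)) : ℕ :=
  Set.ncard {f ∈ A | ∀ i, ∃ z : ℤ, f i = (z : ℝ)}

/-- The Ehrhart series of the root polytope of the bipartite graph with edge set `A`,
as a formal power series: `1 + Σ_{s ≥ 1} |s·Q_A ∩ ℤ^{E⊔V}| xˢ`. -/
noncomputable def ehr {E V : Type*} (A : Finset (E × V)) : PowerSeries ℝ :=
  PowerSeries.mk fun s => if s = 0 then 1 else (latticeCount ((s : ℝ) • rootPolytope A) : ℝ)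

/-- The bipartite graph on vertex set `E ⊕ V` with edge set `A ⊆ E × V`. -/
def bipGraph {E V : Type*} (A : Finset (E × V)) : SimpleGraph (E ⊕ V) :=
  SimpleGraph.fromRel fun x y => ∃ p ∈ A, x = Sum.inl p.1 ∧ y = Sum.inr p.2

noncomputable def sumMapEV (E V : Type*) [Fintype E] [Fintype V] :
    ((E ⊕ V) → ℝ) →ₗ[ℝ] ℝ × ℝ where
  toFun f := (∑ e, f (Sum.inl e), ∑ v, f (Sum.inr v))
  map_add' f g := by simp [Finset.sum_add_distrib, Prod.ext_iff]
  map_smul' c f := by simp [Finset.mul_sum, Prod.ext_iff]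


/-- For a connected bipartite graph `G` with color classes `E` and `V`, the root polytope
`Q_G` has dimension `|E| + |V| - 2`. -/
theorem rootPolytope_dim {E V : Type*} [Fintype E] [Fintype V]
    (ℰ : Finset (E × V)) (hconn : (bipGraph ℰ).Connected) :
    Module.finrank ℝ (vectorSpan ℝ (rootPolytope ℰ)) =
      Fintype.card E + Fintype.card V - 2 := by
  classical
  set S : Set ((E ⊕ V) → ℝ) :=
    ((fun p : E × V => Pi.single (Sum.inl p.1) (1 : ℝ) + Pi.single (Sum.inr p.2) (1 : ℝ)) ''
      (ℰ : Set (E × V))) with hS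
  have hvs : vectorSpan ℝ (rootPolytope ℰ) = vectorSpan ℝ S := by
    rw [rootPolytope, ← direction_affineSpan, affineSpan_convexHull, direction_affineSpan]
  rw [hvs]
  rcases ℰ.eq_empty_or_nonempty with hE | hE
  · -- degenerate case: no edges, connectedness forces a single vertex
    subst hE
    have hnoadj : ∀ x y : E ⊕ V, ¬ (bipGraph (∅ : Finset (E × V))).Adj x y := by
      intro x y h
      rw [bipGraph, SimpleGraph.fromRel_adj] at h
      simp at h
    have hsub : ∀ x y : E ⊕ V, x = y := by
      intro x y
      obtain ⟨w⟩ := hconn.preconnected x y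
      cases w with
      | nil => rfl
      | cons h _ => exact absurd h (hnoadj _ _)
    have hcard : Fintype.card (E ⊕ V) ≤ 1 :=
      Fintype.card_le_one_iff.2 hsub
    rw [Fintype.card_sum] at hcard
    have hSempty : S = ∅ := by simp [hS]
    rw [hSempty, vectorSpan_empty, finrank_bot]
    omega
  · obtain ⟨⟨e0, v0⟩, h0⟩ := hE
    set W : Submodule ℝ ((E ⊕ V) → ℝ) := vectorSpan ℝ S with hW
    set φ := sumMapEV E V with hφ
    -- the value of φ on the generating points
    have hφpt : ∀ p ∈ ℰ,
        φ (Pi.single (Sum.inl p.1) (1 : ℝ) + Pi.single (Sum.inr p.2) (1 : ℝ)) = (1, 1) := by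
      intro p hp
      simp [hφ, sumMapEV, Pi.single_apply, Finset.sum_ite_eq]
    -- Step A : W ≤ ker φ
    have hWker : W ≤ LinearMap.ker φ := by
      rw [hW, vectorSpan_def]
      apply Submodule.span_le.2
      rintro x hx
      rw [Set.mem_vsub] at hx
      obtain ⟨a, ha, b, hb, rfl⟩ := hx
      obtain ⟨p, hp, rfl⟩ := ha
      obtain ⟨q, hq, rfl⟩ := hb
      simp only [SetLike.mem_coe, LinearMap.mem_ker, vsub_eq_sub, map_sub]
      rw [hφpt p hp, hφpt q hq, sub_self]
    -- elements g x
    set g : E ⊕ V → ((E ⊕ V) → ℝ) := Sum.elim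
      (fun e => Pi.single (Sum.inl e) (1 : ℝ) - Pi.single (Sum.inl e0) (1 : ℝ))
      (fun v => Pi.single (Sum.inr v) (1 : ℝ) - Pi.single (Sum.inr v0) (1 : ℝ)) with hg
    have hedge : ∀ p ∈ ℰ,
        (Pi.single (Sum.inl p.1) (1 : ℝ) + Pi.single (Sum.inr p.2) 1)
          - (Pi.single (Sum.inl e0) 1 + Pi.single (Sum.inr v0) 1) ∈ W := by
      intro p hp
      exact vsub_mem_vectorSpan ℝ ⟨p, hp, rfl⟩ ⟨(e0, v0), h0, rfl⟩
    have hstep : ∀ x y : E ⊕ V, (bipGraph ℰ).Adj x y → (g x ∈ W ↔ g y ∈ W) := by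
      have main : ∀ p ∈ ℰ, (g (Sum.inl p.1) ∈ W ↔ g (Sum.inr p.2) ∈ W) := by
        intro p hp
        have hd := hedge p hp
        constructor
        · intro h
          have : g (Sum.inr p.2) =
              ((Pi.single (Sum.inl p.1) (1 : ℝ) + Pi.single (Sum.inr p.2) 1)
                - (Pi.single (Sum.inl e0) 1 + Pi.single (Sum.inr v0) 1)) - g (Sum.inl p.1) := by
            simp [hg]; abel
          rw [this]; exact W.sub_mem hd h
        · intro h
          have : g (Sum.inl p.1) =
              ((Pi.single (Sum.inl p.1) (1 : ℝ) + Pi.single (Sum.inr p.2) 1)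
                - (Pi.single (Sum.inl e0) 1 + Pi.single (Sum.inr v0) 1)) - g (Sum.inr p.2) := by
            simp [hg]; abel
          rw [this]; exact W.sub_mem hd h
      intro x y hxy
      rw [bipGraph, SimpleGraph.fromRel_adj] at hxy
      obtain ⟨-, ⟨p, hp, rfl, rfl⟩ | ⟨p, hp, rfl, rfl⟩⟩ := hxy
      · exact main p hp
      · exact (main p hp).symm
    have hwalk : ∀ x y : E ⊕ V, (bipGraph ℰ).Walk x y → g x ∈ W → g y ∈ W := by
      intro x y w
      induction w with
      | nil => exact id
      | cons h _ ih => exact fun hx => ih ((hstep _ _ h).1 hx)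
    have hbase : g (Sum.inl e0) ∈ W := by
      have : g (Sum.inl e0) = 0 := by simp [hg]
      rw [this]; exact W.zero_mem
    have hkey : ∀ x : E ⊕ V, g x ∈ W := fun x =>
      hwalk _ _ (hconn.preconnected (Sum.inl e0) x).some hbase
    -- Step B : ker φ ≤ W
    have hkerW : LinearMap.ker φ ≤ W := by
      intro f hf
      rw [LinearMap.mem_ker, hφ] at hf
      have hf1 : ∑ e, f (Sum.inl e) = 0 := congrArg Prod.fst hf
      have hf2 : ∑ v, f (Sum.inr v) = 0 := congrArg Prod.snd hf
      have hfeq : f = (∑ e, f (Sum.inl e) • g (Sum.inl e))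
          + (∑ v, f (Sum.inr v) • g (Sum.inr v)) := by
        have e1 : ∀ x : E ⊕ V, f x • (Pi.single x (1 : ℝ) : (E ⊕ V) → ℝ) = (Pi.single x (f x) : (E ⊕ V) → ℝ) := by
          intro x
          funext i
          simp [Pi.single_apply, mul_ite]
        have hsingle : f = ∑ x : E ⊕ V, Pi.single x (f x) :=
          (Finset.univ_sum_single f).symm
        simp only [hg, Sum.elim_inl, Sum.elim_inr, smul_sub]
        rw [Finset.sum_sub_distrib, Finset.sum_sub_distrib,
          ← Finset.sum_smul, ← Finset.sum_smul, hf1, hf2, zero_smul, zero_smul,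
          sub_zero, sub_zero]
        simp only [e1]
        rw [← Fintype.sum_sum_type (f := fun x => Pi.single x (f x))]
        exact hsingle
      rw [hfeq]
      exact W.add_mem
        (Submodule.sum_smul_mem W _ fun e _ => hkey (Sum.inl e))
        (Submodule.sum_smul_mem W _ fun v _ => hkey (Sum.inr v))
    have hWeq : W = LinearMap.ker φ := le_antisymm hWker hkerW
    -- φ is surjective
    have hsurj : Function.Surjective φ := by
      rintro ⟨a, b⟩
      refine ⟨a • (Pi.single (Sum.inl e0) (1 : ℝ) : (E ⊕ V) → ℝ)
          + b • (Pi.single (Sum.inr v0) (1 : ℝ) : (E ⊕ V) → ℝ), ?_⟩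
      simp [hφ, sumMapEV, Pi.single_apply, Finset.sum_ite_eq, Finset.mul_sum]
    have hrange : Module.finrank ℝ (LinearMap.range φ) = 2 := by
      rw [LinearMap.range_eq_top.2 hsurj, finrank_top]
      simp [Module.finrank_prod]
    have hrn := LinearMap.finrank_range_add_finrank_ker φ
    have hdom : Module.finrank ℝ ((E ⊕ V) → ℝ) = Fintype.card E + Fintype.card V := by
      rw [Module.finrank_pi, Fintype.card_sum]
    have hEne : 0 < Fintype.card E := Fintype.card_pos_iff.2 ⟨e0⟩
    have hVne : 0 < Fintype.card V := Fintype.card_pos_iff.2 ⟨v0⟩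
    rw [hWeq]
    omega
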